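/- arXiv:2512.22318 — 7 statements merged into one kernel-verified Lean document; each statement's English description precedes it below -/
import Mathlib

section
/- Let E and R be types, T = E × R × E the type of knowledge-graph triples, freq : E → ℕ, g : ℕ → ℝ, f : ℝ × ℝ → ℝ, and let U be the relation-agnostic uncertainty estimator U(h, r, t) = f(g(freq h), g(freq t)). Let D_novel and D_ID be finite nonempty sets of triples. If there exists a bijection φ : D_novel → D_ID such that for every x = (h, r, t) ∈ D_novel with φ(x) = (h', r', t') one has freq h = freq h' and freq t = freq t', then the tie-corrected AUROC satisfies AUROC½(U, D_novel, D_ID) = 1/2. -/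
open Finset

/-- Strict AUROC: `(1/(|O|·|I|)) · ∑_{x ∈ O} ∑_{y ∈ I} 1[U x > U y]`. -/
noncomputable def aurocStrict {T : Type*} (U : T → ℝ) (O I : Finset T) : ℝ :=
  (1 / ((O.card : ℝ) * (I.card : ℝ))) *
    ∑ x ∈ O, ∑ y ∈ I, (if U x > U y then (1 : ℝ) else 0)

/-- Tie-corrected AUROC:
`(1/(|O|·|I|)) · ∑_{x ∈ O} ∑_{y ∈ I} (1[U x > U y] + (1/2)·1[U x = U y])`. -/
noncomputable def aurocHalf {T : Type*} (U : T → ℝ) (O I : Finset T) : ℝ :=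
  (1 / ((O.card : ℝ) * (I.card : ℝ))) *
    ∑ x ∈ O, ∑ y ∈ I,
      ((if U x > U y then (1 : ℝ) else 0) + (1 / 2) * (if U x = U y then (1 : ℝ) else 0))

/-- A relation-agnostic uncertainty estimator
`U(h,r,t) = f(g(freq h), g(freq t))` achieves tie-corrected AUROC exactly `1/2`
on novel contexts whenever there is a frequency-preserving bijection from
`D_novel` onto `D_ID`. -/
theorem relation_agnostic_aurocHalf_eq_half
    {E R : Type*} (freq : E → ℕ) (g : ℕ → ℝ) (f : ℝ × ℝ → ℝ)
    (U : E × R × E → ℝ)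
    (hU : ∀ h r t, U (h, r, t) = f (g (freq h), g (freq t)))
    (Dnovel DID : Finset (E × R × E))
    (hnovel : Dnovel.Nonempty) (hid : DID.Nonempty)
    (φ : E × R × E → E × R × E)
    (hbij : Set.BijOn φ ↑Dnovel ↑DID)
    (hfreq : ∀ x ∈ Dnovel, freq (φ x).1 = freq x.1 ∧ freq (φ x).2.2 = freq x.2.2) :
    aurocHalf U Dnovel DID = 1 / 2 := by
  have hU' : ∀ p : E × R × E, U p = f (g (freq p.1), g (freq p.2.2)) := by
    intro ⟨h, r, t⟩; exact hU h r t
  have hUφ : ∀ x ∈ Dnovel, U (φ x) = U x := by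
    intro x hx
    rw [hU' (φ x), hU' x, (hfreq x hx).1, (hfreq x hx).2]
  -- reindex inner sum
  have hre : ∀ (G : E × R × E → ℝ), ∑ y ∈ Dnovel, G (φ y) = ∑ y ∈ DID, G y := by
    intro G
    refine Finset.sum_bij (fun y _ => φ y) ?_ ?_ ?_ ?_
    · intro a ha; exact hbij.mapsTo ha
    · intro a ha b hb hab; exact hbij.injOn ha hb hab
    · intro b hb
      obtain ⟨a, ha, rfl⟩ := hbij.surjOn hb
      exact ⟨a, ha, rfl⟩
    · intro a ha; rfl
  have hcard : Dnovel.card = DID.card := by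
    have := hre (fun _ => (1 : ℝ))
    simp only [Finset.sum_const, nsmul_eq_mul, mul_one] at this
    exact_mod_cast this
  set F : E × R × E → E × R × E → ℝ := fun x y =>
    (if U x > U y then (1 : ℝ) else 0) + (1 / 2) * (if U x = U y then (1 : ℝ) else 0)
    with hF
  have hinner : ∀ x ∈ Dnovel, ∑ y ∈ DID, F x y = ∑ y ∈ Dnovel, F x y := by
    intro x hx
    rw [← hre (fun y => F x y)]
    refine Finset.sum_congr rfl fun y hy => ?_
    simp only [hF, hUφ y hy]
  have hsum : ∑ x ∈ Dnovel, ∑ y ∈ DID, F x y = (Dnovel.card : ℝ) ^ 2 / 2 := by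
    rw [Finset.sum_congr rfl hinner]
    have key : (∑ x ∈ Dnovel, ∑ y ∈ Dnovel, F x y) * 2 = (Dnovel.card : ℝ) ^ 2 := by
      have : (∑ x ∈ Dnovel, ∑ y ∈ Dnovel, F x y) * 2
          = ∑ x ∈ Dnovel, ∑ y ∈ Dnovel, (F x y + F y x) := by
        rw [mul_two]
        nth_rewrite 2 [Finset.sum_comm]
        rw [← Finset.sum_add_distrib]
        exact Finset.sum_congr rfl fun x _ => by rw [← Finset.sum_add_distrib]
      rw [this]
      have h1 : ∀ x y : E × R × E, F x y + F y x = 1 := by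
        intro x y
        simp only [hF]
        rcases lt_trichotomy (U x) (U y) with h | h | h
        · rw [if_neg (not_lt.2 h.le), if_pos h, if_neg h.ne, if_neg h.ne']; ring
        · rw [if_neg (not_lt.2 h.le), if_neg (not_lt.2 h.ge), if_pos h, if_pos h.symm]; ring
        · rw [if_pos h, if_neg (not_lt.2 h.le), if_neg h.ne', if_neg h.ne]; ring
      simp [h1, Finset.sum_const]
      ring
    linarith
  simp only [hF] at hsum
  rw [aurocHalf, hsum, ← hcard]
  have hn : (Dnovel.card : ℝ) ≠ 0 := by
    exact_mod_cast Finset.card_ne_zero_of_mem hnovel.choose_spec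
  field_simp
end

section
/- Let T be a type, U : T → ℝ, and let O and I be finite nonempty Finsets of T with |O| = |I|. If there exists a bijection φ : O → I with U(x) ≤ U(φ(x)) for all x ∈ O, then AUROC⁎(U, O, I) ≤ 1/2 − 1/(2·|I|); in particular the strict AUROC of any such estimator is strictly below 1/2. -/
open Finset

/-- If `|O| = |I|` and there is a bijection `φ : O → I` with
`U x ≤ U (φ x)` for all `x ∈ O`, then the strict AUROC is at most
`1/2 − 1/(2·|I|)`, in particular strictly below `1/2`. -/
theorem aurocStrict_le_of_dominating_bijection
    {T : Type*} (U : T → ℝ) (O I : Finset T)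
    (hO : O.Nonempty) (hI : I.Nonempty) (hcard : O.card = I.card)
    (φ : T → T) (hbij : Set.BijOn φ ↑O ↑I)
    (hle : ∀ x ∈ O, U x ≤ U (φ x)) :
    aurocStrict U O I ≤ 1 / 2 - 1 / (2 * (I.card : ℝ)) := by
  have hn : (0 : ℝ) < (I.card : ℝ) := by
    exact_mod_cast Finset.card_pos.mpr hI
  set n : ℝ := (I.card : ℝ) with hn_def
  classical
  -- step 1: reindex and dominate
  have h1 : ∑ x ∈ O, ∑ y ∈ I, (if U x > U y then (1:ℝ) else 0)
      ≤ ∑ x ∈ I, ∑ y ∈ I, (if U x > U y then (1:ℝ) else 0) := by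
    have hre : ∑ x ∈ I, ∑ y ∈ I, (if U x > U y then (1:ℝ) else 0)
        = ∑ x ∈ O, ∑ y ∈ I, (if U (φ x) > U y then (1:ℝ) else 0) := by
      refine (Finset.sum_bij (fun a _ => φ a) ?_ ?_ ?_ ?_).symm
      · intro a ha; exact hbij.mapsTo (by exact_mod_cast ha)
      · intro a ha b hb h; exact hbij.injOn (by exact_mod_cast ha) (by exact_mod_cast hb) h
      · intro b hb
        obtain ⟨a, ha, rfl⟩ := hbij.surjOn (by exact_mod_cast hb)
        exact ⟨a, by exact_mod_cast ha, rfl⟩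
      · intro a ha; rfl
    rw [hre]
    refine Finset.sum_le_sum fun x hx => Finset.sum_le_sum fun y hy => ?_
    by_cases h : U x > U y
    · simp only [if_pos h, if_pos (lt_of_lt_of_le h (hle x hx))]; exact le_refl _
    · simp only [if_neg h]
      split_ifs <;> norm_num
  -- step 2: bound the symmetric double sum
  have h2 : ∑ x ∈ I, ∑ y ∈ I, (if U x > U y then (1:ℝ) else 0) ≤ (n * n - n) / 2 := by
    have key : (∑ x ∈ I, ∑ y ∈ I, (if U x > U y then (1:ℝ) else 0)) +
        (∑ x ∈ I, ∑ y ∈ I, (if U x > U y then (1:ℝ) else 0)) ≤ n * n - n := by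
      conv_lhs => rw [show (∑ x ∈ I, ∑ y ∈ I, (if U x > U y then (1:ℝ) else 0))
          + (∑ x ∈ I, ∑ y ∈ I, (if U x > U y then (1:ℝ) else 0))
          = (∑ x ∈ I, ∑ y ∈ I, (if U x > U y then (1:ℝ) else 0))
          + (∑ y ∈ I, ∑ x ∈ I, (if U x > U y then (1:ℝ) else 0)) from by rw [Finset.sum_comm]]
      rw [← Finset.sum_add_distrib]
      simp_rw [← Finset.sum_add_distrib]
      have hstep : ∀ x ∈ I, ∀ y ∈ I,
          (if U x > U y then (1:ℝ) else 0) + (if U y > U x then (1:ℝ) else 0)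
          ≤ 1 - (if x = y then 1 else 0) := by
        intro x _ y _
        rcases lt_trichotomy (U x) (U y) with h | h | h
        · simp only [if_neg (not_lt.mpr h.le), if_pos h]
          split_ifs with he
          · subst he; exact absurd h (lt_irrefl _)
          · norm_num
        · simp only [if_neg (not_lt.mpr h.le), if_neg (not_lt.mpr h.ge)]
          split_ifs <;> norm_num
        · simp only [if_pos h, if_neg (not_lt.mpr h.le)]
          split_ifs with he
          · subst he; exact absurd h (lt_irrefl _)
          · norm_num
      calc ∑ x ∈ I, ∑ y ∈ I,
            ((if U x > U y then (1:ℝ) else 0) + (if U y > U x then (1:ℝ) else 0))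
          ≤ ∑ x ∈ I, ∑ y ∈ I, ((1:ℝ) - if x = y then 1 else 0) :=
            Finset.sum_le_sum fun x hx => Finset.sum_le_sum fun y hy => hstep x hx y hy
        _ = n * n - n := by
            have hrow : ∀ x ∈ I, ∑ y ∈ I, ((1:ℝ) - if x = y then 1 else 0) = n - 1 := by
              intro x hx
              rw [Finset.sum_sub_distrib, Finset.sum_const, nsmul_eq_mul, mul_one,
                Finset.sum_ite_eq I x (fun _ => (1:ℝ)), if_pos hx]
            rw [Finset.sum_congr rfl hrow, Finset.sum_const, nsmul_eq_mul]
            ring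
    linarith
  have hO0 : (O.card : ℝ) = n := by rw [hn_def]; exact_mod_cast hcard
  rw [aurocStrict, hO0]
  have hb : (1 / (n * n)) * ∑ x ∈ O, ∑ y ∈ I, (if U x > U y then (1:ℝ) else 0)
      ≤ (1 / (n * n)) * ((n * n - n) / 2) := by
    apply mul_le_mul_of_nonneg_left (le_trans h1 h2)
    positivity
  refine le_trans hb ?_
  rw [div_mul_eq_mul_div, one_mul]
  rw [show (n * n - n) / 2 / (n * n) = 1/2 - 1/(2*n) from by field_simp]
end

section
/- Let T be a type, U : T → ℝ, δ ≥ 0, and let O and I be finite nonempty Finsets of T with |O| = |I|. If there exists a bijection φ : O → I with U(x) ≤ U(φ(x)) + δ for all x ∈ O, then AUROC⁎(U, O, I) ≤ 1/2 + (1/|I|²) · |{(a, b) ∈ I × I : 0 ≤ U(b) − U(a) < δ}|, i.e. the strict AUROC exceeds 1/2 by at most the fraction of in-distribution score pairs that are δ-close in the relevant direction. -/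
open Finset

/-- If `|O| = |I|` and there is a bijection `φ : O → I` with
`U x ≤ U (φ x) + δ` for all `x ∈ O` (`δ ≥ 0`), then the strict AUROC exceeds
`1/2` by at most the fraction of in-distribution pairs `(a, b) ∈ I × I` with
`0 ≤ U b − U a < δ`. -/
theorem aurocStrict_le_half_add_close_pairs
    {T : Type*} [DecidableEq T] (U : T → ℝ) (δ : ℝ) (hδ : 0 ≤ δ)
    (O I : Finset T)
    (hO : O.Nonempty) (hI : I.Nonempty) (hcard : O.card = I.card)
    (φ : T → T) (hbij : Set.BijOn φ ↑O ↑I)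
    (hle : ∀ x ∈ O, U x ≤ U (φ x) + δ) :
    aurocStrict U O I ≤ 1 / 2 +
      (1 / ((I.card : ℝ) ^ 2)) *
        (((I ×ˢ I).filter (fun p => 0 ≤ U p.2 - U p.1 ∧ U p.2 - U p.1 < δ)).card : ℝ) := by
  classical
  have hn : (0:ℝ) < (I.card : ℝ) := by exact_mod_cast hI.card_pos
  -- Step 1: bound the double sum
  have h1 : ∑ x ∈ O, ∑ y ∈ I, (if U x > U y then (1 : ℝ) else 0)
      ≤ ∑ x ∈ O, ∑ y ∈ I, (if U y - U (φ x) < δ then (1 : ℝ) else 0) := by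
    apply Finset.sum_le_sum
    intro x hx
    apply Finset.sum_le_sum
    intro y hy
    have := hle x hx
    split_ifs with h h' h' <;> try norm_num
    exact absurd (by linarith) h'
  have h2 : ∑ x ∈ O, ∑ y ∈ I, (if U y - U (φ x) < δ then (1 : ℝ) else 0)
      = ∑ a ∈ I, ∑ y ∈ I, (if U y - U a < δ then (1 : ℝ) else 0) := by
    apply Finset.sum_bij (fun x _ => φ x)
    · intro a ha; exact hbij.mapsTo ha
    · intro a ha b hb h; exact hbij.injOn ha hb h
    · intro b hb
      obtain ⟨a, ha, rfl⟩ := hbij.surjOn hb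
      exact ⟨a, ha, rfl⟩
    · intro a ha; rfl
  have h3 : ∑ a ∈ I, ∑ y ∈ I, (if U y - U a < δ then (1 : ℝ) else 0)
      = (∑ a ∈ I, ∑ y ∈ I, (if U y < U a then (1 : ℝ) else 0))
        + ∑ a ∈ I, ∑ y ∈ I, (if 0 ≤ U y - U a ∧ U y - U a < δ then (1 : ℝ) else 0) := by
    rw [← Finset.sum_add_distrib]
    apply Finset.sum_congr rfl
    intro a _
    rw [← Finset.sum_add_distrib]
    apply Finset.sum_congr rfl
    intro y _
    by_cases h : U y < U a
    · rw [if_pos h, if_pos (by linarith), if_neg (by intro hc; linarith [hc.1])]; ring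
    · rw [if_neg h]
      by_cases h' : U y - U a < δ
      · rw [if_pos h', if_pos ⟨by linarith, h'⟩]; ring
      · rw [if_neg h', if_neg (by intro hc; exact h' hc.2)]; ring
  have h4 : ∑ a ∈ I, ∑ y ∈ I, (if U y < U a then (1 : ℝ) else 0)
      ≤ (I.card : ℝ) ^ 2 / 2 := by
    have hswap : ∑ a ∈ I, ∑ y ∈ I, (if U y < U a then (1 : ℝ) else 0)
        = ∑ a ∈ I, ∑ y ∈ I, (if U a < U y then (1 : ℝ) else 0) := Finset.sum_comm
    have hsum : ∑ a ∈ I, ∑ y ∈ I, ((if U y < U a then (1 : ℝ) else 0)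
        + (if U a < U y then (1 : ℝ) else 0)) ≤ ∑ a ∈ I, ∑ y ∈ I, (1:ℝ) := by
      apply Finset.sum_le_sum; intro a _; apply Finset.sum_le_sum; intro y _
      split_ifs with h h' <;> try norm_num
      linarith
    simp only [Finset.sum_add_distrib, Finset.sum_const, nsmul_eq_mul, mul_one] at hsum
    rw [← hswap] at hsum
    nlinarith [hsum]
  have h5 : ∑ a ∈ I, ∑ y ∈ I, (if 0 ≤ U y - U a ∧ U y - U a < δ then (1 : ℝ) else 0)
      = (((I ×ˢ I).filter (fun p => 0 ≤ U p.2 - U p.1 ∧ U p.2 - U p.1 < δ)).card : ℝ) := by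
    rw [← Finset.sum_product']
    rw [Finset.sum_boole]
  have hS : ∑ x ∈ O, ∑ y ∈ I, (if U x > U y then (1 : ℝ) else 0)
      ≤ (I.card : ℝ) ^ 2 / 2
        + (((I ×ˢ I).filter (fun p => 0 ≤ U p.2 - U p.1 ∧ U p.2 - U p.1 < δ)).card : ℝ) := by
    calc _ ≤ _ := h1
    _ = _ := h2
    _ = _ := h3
    _ ≤ _ := by rw [h5]; exact add_le_add_left h4 _
  unfold aurocStrict
  rw [hcard]
  have hn2 : (0:ℝ) < (I.card : ℝ) * (I.card : ℝ) := by positivity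
  rw [div_mul_eq_mul_div, div_le_iff₀ hn2, one_mul]
  have : (1 / 2 + 1 / (I.card : ℝ) ^ 2 *
      (((I ×ˢ I).filter (fun p => 0 ≤ U p.2 - U p.1 ∧ U p.2 - U p.1 < δ)).card : ℝ))
      * ((I.card : ℝ) * (I.card : ℝ))
      = (I.card : ℝ) ^ 2 / 2
        + (((I ×ˢ I).filter (fun p => 0 ≤ U p.2 - U p.1 ∧ U p.2 - U p.1 < δ)).card : ℝ) := by
    field_simp
  rw [this]
  exact hS
end

section
/- Let E and R be types, freq : E → ℕ, g : ℕ → ℝ, and let U_sem(h, r, t) = (g(freq h) + g(freq t))/2 be the semantic uncertainty. Let D_novel and D_ID be finite nonempty sets of triples. If there exists a bijection φ : D_novel → D_ID such that for every x = (h, r, t) ∈ D_novel with φ(x) = (h', r', t') one has freq h = freq h' and freq t = freq t', then AUROC½(U_sem, D_novel, D_ID) = 1/2: semantic uncertainty is exactly at chance level on novel-context out-of-distribution triples. -/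
open Finset

/-- Semantic uncertainty `U_sem(h,r,t) = (g(freq h) + g(freq t))/2`
achieves tie-corrected AUROC exactly `1/2` on novel contexts whenever there is a
frequency-preserving bijection from `D_novel` onto `D_ID`. -/
theorem semantic_aurocHalf_eq_half
    {E R : Type*} (freq : E → ℕ) (g : ℕ → ℝ)
    (Usem : E × R × E → ℝ)
    (hUsem : ∀ h r t, Usem (h, r, t) = (g (freq h) + g (freq t)) / 2)
    (Dnovel DID : Finset (E × R × E))
    (hnovel : Dnovel.Nonempty) (hid : DID.Nonempty)
    (φ : E × R × E → E × R × E)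
    (hbij : Set.BijOn φ ↑Dnovel ↑DID)
    (hfreq : ∀ x ∈ Dnovel, freq (φ x).1 = freq x.1 ∧ freq (φ x).2.2 = freq x.2.2) :
    aurocHalf Usem Dnovel DID = 1 / 2 := by
  have hEq : ∀ x ∈ Dnovel, Usem (φ x) = Usem x := by
    intro x hx
    have h1 : Usem ((φ x).1, (φ x).2.1, (φ x).2.2) = (g (freq (φ x).1) + g (freq (φ x).2.2)) / 2 :=
      hUsem _ _ _
    have h2 : Usem (x.1, x.2.1, x.2.2) = (g (freq x.1) + g (freq x.2.2)) / 2 := hUsem _ _ _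
    obtain ⟨hh, ht⟩ := hfreq x hx
    simpa [hh, ht, h2] using h1
  set f : ℝ → ℝ → ℝ := fun a b =>
    (if a > b then (1 : ℝ) else 0) + (1 / 2) * (if a = b then (1 : ℝ) else 0) with hfdef
  have hpair : ∀ a b : ℝ, f a b + f b a = 1 := by
    intro a b
    rcases lt_trichotomy a b with h | h | h
    · simp [hfdef, h, h.ne, h.ne', not_lt.mpr h.le]
    · subst h; simp [hfdef]; ring
    · simp [hfdef, h, h.ne, h.ne', not_lt.mpr h.le]
  -- reindex inner sum
  have hinner : ∀ x : E × R × E, ∑ y ∈ DID, f (Usem x) (Usem y)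
      = ∑ y ∈ Dnovel, f (Usem x) (Usem y) := by
    intro x
    refine (Finset.sum_bij (fun a _ => φ a) ?_ ?_ ?_ ?_).symm
    · intro a ha; exact hbij.mapsTo ha
    · intro a ha b hb hab; exact hbij.injOn ha hb hab
    · intro b hb
      obtain ⟨a, ha, rfl⟩ := hbij.surjOn hb
      exact ⟨a, ha, rfl⟩
    · intro a ha; rw [hEq a ha]
  have hS : ∑ x ∈ Dnovel, ∑ y ∈ Dnovel, f (Usem x) (Usem y)
      = (Dnovel.card : ℝ) ^ 2 / 2 := by
    have h2 : 2 * ∑ x ∈ Dnovel, ∑ y ∈ Dnovel, f (Usem x) (Usem y)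
        = (Dnovel.card : ℝ) ^ 2 := by
      have hcomm : ∑ x ∈ Dnovel, ∑ y ∈ Dnovel, f (Usem x) (Usem y)
          = ∑ x ∈ Dnovel, ∑ y ∈ Dnovel, f (Usem y) (Usem x) := Finset.sum_comm
      calc 2 * ∑ x ∈ Dnovel, ∑ y ∈ Dnovel, f (Usem x) (Usem y)
          = ∑ x ∈ Dnovel, ∑ y ∈ Dnovel, (f (Usem x) (Usem y) + f (Usem y) (Usem x)) := by
            rw [two_mul]; nth_rewrite 2 [hcomm]
            rw [← Finset.sum_add_distrib]
            congr 1; ext x; rw [← Finset.sum_add_distrib]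
        _ = ∑ x ∈ Dnovel, ∑ y ∈ Dnovel, (1 : ℝ) := by
            refine Finset.sum_congr rfl fun x _ => Finset.sum_congr rfl fun y _ => hpair _ _
        _ = (Dnovel.card : ℝ) ^ 2 := by simp [sq]
    linarith
  have hcard : DID.card = Dnovel.card := by
    refine (Finset.card_bij (fun a _ => φ a) ?_ ?_ ?_).symm
    · intro a ha; exact hbij.mapsTo ha
    · intro a ha b hb hab; exact hbij.injOn ha hb hab
    · intro b hb
      obtain ⟨a, ha, rfl⟩ := hbij.surjOn hb
      exact ⟨a, ha, rfl⟩
  have hn : (Dnovel.card : ℝ) ≠ 0 := by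
    exact_mod_cast Nat.cast_ne_zero.mpr (Finset.card_ne_zero_of_mem hnovel.choose_spec)
  unfold aurocHalf
  have : ∑ x ∈ Dnovel, ∑ y ∈ DID,
      ((if Usem x > Usem y then (1 : ℝ) else 0)
        + (1 / 2) * (if Usem x = Usem y then (1 : ℝ) else 0))
      = (Dnovel.card : ℝ) ^ 2 / 2 := by
    rw [← hS]
    exact Finset.sum_congr rfl fun x _ => hinner x
  rw [this, hcard]
  field_simp
end

section
/- Let E and R be types, c : E × R → {0, 1} a coverage function, and U_str(h, r, t) = 2 − c(h, r) − c(t, r) the structural uncertainty. Let D_ID be a finite nonempty set of triples such that every (h, r, t) ∈ D_ID has c(h, r) = 1 and c(t, r) = 1, and let D_emerge be a finite nonempty set of triples. Let ρ = |{x ∈ D_emerge : U_str(x) = 0}| / |D_emerge| be the fraction of emerging-entity triples with full coverage. Then AUROC⁎(U_str, D_emerge, D_ID) = 1 − ρ; in particular, if ρ > 0 then structural uncertainty achieves strict AUROC strictly less than 1 on emerging entities. -/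
open Finset

open Classical in
/-- With binary coverage `c : E × R → {0,1}` and structural
uncertainty `U_str(h,r,t) = 2 − c(h,r) − c(t,r)`, if every ID triple is fully
covered and `ρ` is the fraction of emerging triples with `U_str = 0`, then
`AUROC⁎(U_str, D_emerge, D_ID) = 1 − ρ`; in particular if `ρ > 0` the strict
AUROC is strictly below `1`. -/
theorem structural_aurocStrict_emerge
    {E R : Type*} (c : E × R → ℝ) (hc : ∀ p, c p = 0 ∨ c p = 1)
    (Ustr : E × R × E → ℝ)
    (hUstr : ∀ h r t, Ustr (h, r, t) = 2 - c (h, r) - c (t, r))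
    (DID Demerge : Finset (E × R × E))
    (hid : DID.Nonempty) (hem : Demerge.Nonempty)
    (hcov : ∀ x ∈ DID, c (x.1, x.2.1) = 1 ∧ c (x.2.2, x.2.1) = 1)
    (ρ : ℝ)
    (hρ : ρ = ((Demerge.filter (fun x => Ustr x = 0)).card : ℝ) / (Demerge.card : ℝ)) :
    aurocStrict Ustr Demerge DID = 1 - ρ ∧
      (ρ > 0 → aurocStrict Ustr Demerge DID < 1) := by
  have hUy : ∀ y ∈ DID, Ustr y = 0 := by
    intro y hy
    obtain ⟨h1, h2⟩ := hcov y hy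
    rw [show y = (y.1, y.2.1, y.2.2) from rfl, hUstr, h1, h2]; ring
  have hUx : ∀ x, Ustr x ≥ 0 := by
    intro x
    rw [show x = (x.1, x.2.1, x.2.2) from rfl, hUstr]
    rcases hc (x.1, x.2.1) with h1 | h1 <;> rcases hc (x.2.2, x.2.1) with h2 | h2 <;>
      rw [h1, h2] <;> norm_num
  have key : aurocStrict Ustr Demerge DID = 1 - ρ := by
    unfold aurocStrict
    have hsum : ∀ x ∈ Demerge, (∑ y ∈ DID, (if Ustr x > Ustr y then (1:ℝ) else 0))
        = if Ustr x = 0 then 0 else (DID.card : ℝ) := by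
      intro x hx
      by_cases h : Ustr x = 0
      · simp only [h, if_true]
        apply Finset.sum_eq_zero
        intro y hy
        rw [hUy y hy]; simp
      · have hpos : Ustr x > 0 := lt_of_le_of_ne (hUx x) (Ne.symm h)
        simp only [h, if_false]
        rw [Finset.sum_congr rfl (fun y hy => by rw [hUy y hy])]
        simp [hpos]
    rw [Finset.sum_congr rfl hsum, Finset.sum_ite, Finset.sum_const, Finset.sum_const]
    have hcard : (Demerge.filter (fun x => ¬ Ustr x = 0)).card
        = Demerge.card - (Demerge.filter (fun x => Ustr x = 0)).card :=
      by rw [Finset.filter_not, Finset.card_sdiff_of_subset (Finset.filter_subset _ _)]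
    have h0 : (0:ℝ) < (Demerge.card : ℝ) := by exact_mod_cast hem.card_pos
    have h1 : (0:ℝ) < (DID.card : ℝ) := by exact_mod_cast hid.card_pos
    have hle : (Demerge.filter (fun x => Ustr x = 0)).card ≤ Demerge.card :=
      Finset.card_filter_le _ _
    rw [hρ, hcard]
    simp only [smul_zero, nsmul_eq_mul, Nat.cast_sub hle]
    field_simp
    ring
  refine ⟨key, fun hpos => ?_⟩
  rw [key]; linarith
end

section
/- Let E and R be types, freq : E → ℕ, g : ℕ → ℝ, c : E × R → {0, 1}, U_sem(h, r, t) = (g(freq h) + g(freq t))/2, and U_str(h, r, t) = 2 − c(h, r) − c(t, r). Let D_ID, D_emerge, D_novel be finite sets of triples with D_ID nonempty and D_emerge ∪ D_novel nonempty. Assume: (A2) every (h, r, t) ∈ D_ID has c(h, r) = 1 and c(t, r) = 1; every (h, r, t) ∈ D_novel has c(h, r) = 0 or c(t, r) = 0; (A4) there is Δ with 0 ≤ Δ < 1 such that U_sem(y) − U_sem(x) ≤ Δ for all x ∈ D_novel and y ∈ D_ID; (A6) U_sem(x) > U_sem(y) for all x ∈ D_emerge and y ∈ D_ID. Then for every α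 with 0 < α < 1/(1 + Δ), the combined estimator U_comb = α·U_sem + (1 − α)·U_str satisfies AUROC⁎(U_comb, D_emerge ∪ D_novel, D_ID) = 1. -/
open Finset

/-- Under (A2) full ID coverage and missing novel coverage,
(A4) bounded semantic gap `Δ < 1`, and (A6) semantic separation of emerging
entities, the combined estimator `α·U_sem + (1 − α)·U_str` with
`0 < α < 1/(1 + Δ)` achieves strict AUROC `1` on `D_emerge ∪ D_novel`. -/
theorem combined_aurocStrict_eq_one
    {E R : Type*} [DecidableEq E] [DecidableEq R]
    (freq : E → ℕ) (g : ℕ → ℝ)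
    (c : E × R → ℝ) (hc : ∀ p, c p = 0 ∨ c p = 1)
    (Usem Ustr : E × R × E → ℝ)
    (hUsem : ∀ h r t, Usem (h, r, t) = (g (freq h) + g (freq t)) / 2)
    (hUstr : ∀ h r t, Ustr (h, r, t) = 2 - c (h, r) - c (t, r))
    (DID Demerge Dnovel : Finset (E × R × E))
    (hid : DID.Nonempty) (hood : (Demerge ∪ Dnovel).Nonempty)
    (hA2 : ∀ x ∈ DID, c (x.1, x.2.1) = 1 ∧ c (x.2.2, x.2.1) = 1)
    (hA2' : ∀ x ∈ Dnovel, c (x.1, x.2.1) = 0 ∨ c (x.2.2, x.2.1) = 0)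
    (Δ : ℝ) (hΔ0 : 0 ≤ Δ) (hΔ1 : Δ < 1)
    (hA4 : ∀ x ∈ Dnovel, ∀ y ∈ DID, Usem y - Usem x ≤ Δ)
    (hA6 : ∀ x ∈ Demerge, ∀ y ∈ DID, Usem x > Usem y)
    (α : ℝ) (hα0 : 0 < α) (hα1 : α < 1 / (1 + Δ)) :
    aurocStrict (fun x => α * Usem x + (1 - α) * Ustr x) (Demerge ∪ Dnovel) DID = 1 := by
  have h1Δ : (0:ℝ) < 1 + Δ := by linarith
  have hα1' : α * (1 + Δ) < 1 := (lt_div_iff₀ h1Δ).mp hα1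
  have hα1'' : α < 1 := by nlinarith
  have hc01 : ∀ p, 0 ≤ c p ∧ c p ≤ 1 := by
    intro p; rcases hc p with h | h <;> rw [h] <;> constructor <;> norm_num
  have key : ∀ x ∈ Demerge ∪ Dnovel, ∀ y ∈ DID,
      α * Usem x + (1 - α) * Ustr x > α * Usem y + (1 - α) * Ustr y := by
    intro x hx y hy
    obtain ⟨h, r, t⟩ := y
    obtain ⟨hy1, hy2⟩ := hA2 _ hy
    have hUy : Ustr (h, r, t) = 0 := by rw [hUstr]; simp at hy1 hy2; rw [hy1, hy2]; ring
    obtain ⟨a, s, b⟩ := x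
    have hxc1 := hc01 (a, s)
    have hxc2 := hc01 (b, s)
    rcases Finset.mem_union.mp hx with hx | hx
    · have h6 := hA6 _ hx _ hy
      have hUx : Ustr (a, s, b) ≥ 0 := by rw [hUstr]; simp; linarith [hxc1.2, hxc2.2]
      rw [hUy]
      nlinarith
    · have h4 := hA4 _ hx _ hy
      have hUx : Ustr (a, s, b) ≥ 1 := by
        rw [hUstr]
        rcases hA2' _ hx with h0 | h0 <;> simp at h0 <;> rw [h0] <;>
          simp <;> linarith [hxc1.2, hxc2.2]
      rw [hUy]
      nlinarith
  unfold aurocStrict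
  have hsum : ∀ x ∈ Demerge ∪ Dnovel,
      (∑ y ∈ DID, (if (α * Usem x + (1 - α) * Ustr x) > (α * Usem y + (1 - α) * Ustr y)
        then (1:ℝ) else 0)) = DID.card := by
    intro x hx
    rw [Finset.sum_congr rfl (fun y hy => if_pos (key x hx y hy))]
    simp
  rw [Finset.sum_congr rfl hsum]
  simp only [Finset.sum_const, nsmul_eq_mul]
  have hn : ((Demerge ∪ Dnovel).card : ℝ) ≠ 0 := by
    exact_mod_cast Finset.card_ne_zero_of_mem hood.choose_spec
  have hm : ((DID.card : ℝ)) ≠ 0 := by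
    exact_mod_cast Finset.card_ne_zero_of_mem hid.choose_spec
  field_simp
end

section
/- Under the hypotheses of the combined-estimator theorem — (A2) every triple in D_ID is fully covered; every triple in D_novel has missing coverage; (A4) U_sem(y) − U_sem(x) ≤ Δ < 1 for all x ∈ D_novel, y ∈ D_ID; (A6) U_sem(x) > U_sem(y) for all x ∈ D_emerge, y ∈ D_ID; and 0 < α < 1/(1 + Δ) — assume additionally that D_emerge and D_novel are nonempty, that there exists x₀ ∈ D_emerge with U_str(x₀) = 0, and that there exist x₁ ∈ D_novel and y₁ ∈ D_ID with U_sem(x₁) ≤ U_sem(y₁). Then, writing O = D_emerge ∪ D_novel, the combined estimator U_comb = α·U_sem + (1 − α)·U_str strictly dominates both single signals: AUROC⁎(U_comb, O, D_ID) = 1 > AUROC⁎(U_str, O, D_ID) and AUROC⁎(U_comb, O, D_ID) = 1 > AUROC⁎(U_sem, O, D_ID). -/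
open Finset

lemma aurocStrict_eq_one {T : Type*} (U : T → ℝ) (O I : Finset T)
    (hO : O.Nonempty) (hI : I.Nonempty)
    (h : ∀ x ∈ O, ∀ y ∈ I, U x > U y) : aurocStrict U O I = 1 := by
  have hsum : ∑ x ∈ O, ∑ y ∈ I, (if U x > U y then (1 : ℝ) else 0)
      = (O.card : ℝ) * (I.card : ℝ) := by
    rw [Finset.sum_congr rfl fun x hx => Finset.sum_congr rfl fun y hy => if_pos (h x hx y hy)]
    simp [mul_comm]
  have hO0 : (O.card : ℝ) ≠ 0 := Nat.cast_ne_zero.2 (Finset.card_ne_zero_of_mem hO.choose_spec)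
  have hI0 : (I.card : ℝ) ≠ 0 := Nat.cast_ne_zero.2 (Finset.card_ne_zero_of_mem hI.choose_spec)
  rw [aurocStrict, hsum]
  field_simp

lemma aurocStrict_lt_one {T : Type*} (U : T → ℝ) (O I : Finset T)
    {x₀ y₀ : T} (hx₀ : x₀ ∈ O) (hy₀ : y₀ ∈ I) (h : ¬ U x₀ > U y₀) :
    aurocStrict U O I < 1 := by
  have hO0 : (0:ℝ) < (O.card : ℝ) := by
    exact_mod_cast Finset.card_pos.2 ⟨x₀, hx₀⟩
  have hI0 : (0:ℝ) < (I.card : ℝ) := by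
    exact_mod_cast Finset.card_pos.2 ⟨y₀, hy₀⟩
  have hinner : ∀ x ∈ O, ∑ y ∈ I, (if U x > U y then (1 : ℝ) else 0) ≤ (I.card : ℝ) := by
    intro x hx
    calc ∑ y ∈ I, (if U x > U y then (1 : ℝ) else 0) ≤ ∑ y ∈ I, (1:ℝ) :=
          Finset.sum_le_sum fun y hy => by split <;> norm_num
      _ = (I.card : ℝ) := by simp
  have hstrict : ∑ y ∈ I, (if U x₀ > U y then (1 : ℝ) else 0) < (I.card : ℝ) := by
    calc ∑ y ∈ I, (if U x₀ > U y then (1 : ℝ) else 0)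
        < ∑ y ∈ I, (1:ℝ) := by
          apply Finset.sum_lt_sum (fun y hy => by split <;> norm_num) ⟨y₀, hy₀, by
            rw [if_neg h]; norm_num⟩
      _ = (I.card : ℝ) := by simp
  have hsum : ∑ x ∈ O, ∑ y ∈ I, (if U x > U y then (1 : ℝ) else 0)
      < (O.card : ℝ) * (I.card : ℝ) := by
    calc ∑ x ∈ O, ∑ y ∈ I, (if U x > U y then (1 : ℝ) else 0)
        < ∑ x ∈ O, (I.card : ℝ) :=
          Finset.sum_lt_sum hinner ⟨x₀, hx₀, hstrict⟩
      _ = (O.card : ℝ) * (I.card : ℝ) := by simp [mul_comm]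
  rw [aurocStrict]
  have hpos : (0:ℝ) < (O.card : ℝ) * (I.card : ℝ) := mul_pos hO0 hI0
  rw [div_mul_eq_mul_div, one_mul, div_lt_one hpos]
  exact hsum

/-- Under the hypotheses of the combined-estimator theorem,
if moreover some emerging triple has full coverage (`U_str x₀ = 0`) and some
novel triple has semantic uncertainty not above some ID triple's, then the
combined estimator strictly dominates both single signals on
`O = D_emerge ∪ D_novel`. -/
theorem combined_strictly_dominates
    {E R : Type*} [DecidableEq E] [DecidableEq R]
    (freq : E → ℕ) (g : ℕ → ℝ)
    (c : E × R → ℝ) (hc : ∀ p, c p = 0 ∨ c p = 1)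
    (Usem Ustr : E × R × E → ℝ)
    (hUsem : ∀ h r t, Usem (h, r, t) = (g (freq h) + g (freq t)) / 2)
    (hUstr : ∀ h r t, Ustr (h, r, t) = 2 - c (h, r) - c (t, r))
    (DID Demerge Dnovel : Finset (E × R × E))
    (hid : DID.Nonempty) (hem : Demerge.Nonempty) (hnov : Dnovel.Nonempty)
    (hA2 : ∀ x ∈ DID, c (x.1, x.2.1) = 1 ∧ c (x.2.2, x.2.1) = 1)
    (hA2' : ∀ x ∈ Dnovel, c (x.1, x.2.1) = 0 ∨ c (x.2.2, x.2.1) = 0)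
    (Δ : ℝ) (hΔ0 : 0 ≤ Δ) (hΔ1 : Δ < 1)
    (hA4 : ∀ x ∈ Dnovel, ∀ y ∈ DID, Usem y - Usem x ≤ Δ)
    (hA6 : ∀ x ∈ Demerge, ∀ y ∈ DID, Usem x > Usem y)
    (α : ℝ) (hα0 : 0 < α) (hα1 : α < 1 / (1 + Δ))
    (hx0 : ∃ x₀ ∈ Demerge, Ustr x₀ = 0)
    (hx1 : ∃ x₁ ∈ Dnovel, ∃ y₁ ∈ DID, Usem x₁ ≤ Usem y₁) :
    aurocStrict (fun x => α * Usem x + (1 - α) * Ustr x) (Demerge ∪ Dnovel) DID = 1 ∧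
      aurocStrict Ustr (Demerge ∪ Dnovel) DID <
        aurocStrict (fun x => α * Usem x + (1 - α) * Ustr x) (Demerge ∪ Dnovel) DID ∧
      aurocStrict Usem (Demerge ∪ Dnovel) DID <
        aurocStrict (fun x => α * Usem x + (1 - α) * Ustr x) (Demerge ∪ Dnovel) DID := by
  obtain ⟨x₀, hx₀O, hx₀str⟩ := hx0
  obtain ⟨x₁, hx₁O, y₁, hy₁, hx₁sem⟩ := hx1
  -- basic facts
  have hΔpos : (0:ℝ) < 1 + Δ := by linarith
  have hα1' : α * (1 + Δ) < 1 := by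
    rw [lt_div_iff₀ hΔpos] at hα1; linarith
  have hαlt1 : α < 1 := by nlinarith
  have hstrID : ∀ y ∈ DID, Ustr y = 0 := by
    intro y hy
    obtain ⟨h, r, t⟩ := y
    obtain ⟨h1, h2⟩ := hA2 _ hy
    rw [hUstr]; simp at h1 h2 ⊢; rw [h1, h2]; ring
  have hstrNonneg : ∀ x : E × R × E, 0 ≤ Ustr x := by
    intro ⟨h, r, t⟩
    rw [hUstr]
    rcases hc (h, r) with h1 | h1 <;> rcases hc (t, r) with h2 | h2 <;>
      rw [h1, h2] <;> norm_num
  have hstrNov : ∀ x ∈ Dnovel, 1 ≤ Ustr x := by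
    intro ⟨h, r, t⟩ hx
    rw [hUstr]
    rcases hA2' _ hx with h1 | h1 <;> simp at h1 <;> rw [h1] <;>
      [rcases hc (t, r) with h2 | h2; rcases hc (h, r) with h2 | h2] <;>
      rw [h2] <;> norm_num
  set Ucomb := fun x => α * Usem x + (1 - α) * Ustr x with hUcomb
  have key : ∀ x ∈ Demerge ∪ Dnovel, ∀ y ∈ DID, Ucomb x > Ucomb y := by
    intro x hx y hy
    have hy0 := hstrID y hy
    simp only [hUcomb, hy0]
    rcases Finset.mem_union.1 hx with hx | hx
    · have := hA6 x hx y hy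
      have := hstrNonneg x
      nlinarith
    · have h4 := hA4 x hx y hy
      have h1 := hstrNov x hx
      nlinarith
  have hOne : Demerge ∪ Dnovel |>.Nonempty := hem.mono Finset.subset_union_left
  have heq : aurocStrict Ucomb (Demerge ∪ Dnovel) DID = 1 :=
    aurocStrict_eq_one _ _ _ hOne hid key
  refine ⟨heq, ?_, ?_⟩
  · rw [heq]
    obtain ⟨y₀, hy₀⟩ := hid
    exact aurocStrict_lt_one Ustr _ _
      (Finset.mem_union.2 (Or.inl hx₀O)) hy₀
      (by rw [hx₀str, hstrID y₀ hy₀]; exact lt_irrefl 0)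
  · rw [heq]
    exact aurocStrict_lt_one Usem _ _
      (Finset.mem_union.2 (Or.inr hx₁O)) hy₁ (not_lt.2 hx₁sem)
end
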